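/- arXiv:1808.01193 — 4 statements merged into one kernel-verified Lean document; each statement's English description precedes it below -/
import Mathlib

section
/- If x_1 < x_2 < \cdots < x_n are the zeros of the Stieltjes–Wigert polynomial S_n, then x_j x_{n+1-j} = q^{-2n-1} for every j = 1, \ldots, n. -/
/-- q-Pochhammer symbol (a;q)_m. -/
noncomputable def qPoch (q a : ℝ) (m : ℕ) : ℝ := ∏ j ∈ Finset.range m, (1 - a * q ^ j)

/-- Gaussian (q-)binomial coefficient. -/
noncomputable def qbinom (q : ℝ) (n k : ℕ) : ℝ :=
  qPoch q q n / (qPoch q q k * qPoch q q (n - k))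

/-- Monic Stieltjes–Wigert polynomial. -/
noncomputable def SW (q : ℝ) (n : ℕ) (x : ℝ) : ℝ :=
  (-1) ^ n * q ^ (-(n : ℝ) ^ 2 - n / 2) *
    ∑ k ∈ Finset.range (n + 1), qbinom q n k * q ^ ((k : ℝ) ^ 2 + k / 2) * (-x) ^ k

lemma qPoch_pos {q : ℝ} (hq0 : 0 < q) (hq1 : q < 1) (m : ℕ) : 0 < qPoch q q m := by
  apply Finset.prod_pos
  intro j _
  have : q * q ^ j ≤ q * 1 := by
    apply mul_le_mul_of_nonneg_left (pow_le_one₀ hq0.le hq1.le) hq0.le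
  nlinarith

lemma qbinom_pos {q : ℝ} (hq0 : 0 < q) (hq1 : q < 1) (n k : ℕ) : 0 < qbinom q n k := by
  unfold qbinom
  have h1 := qPoch_pos hq0 hq1 n
  have h2 := qPoch_pos hq0 hq1 k
  have h3 := qPoch_pos hq0 hq1 (n - k)
  positivity

lemma SW_ne_zero_of_nonpos {q : ℝ} (hq0 : 0 < q) (hq1 : q < 1) (n : ℕ) {y : ℝ}
    (hy : y ≤ 0) : SW q n y ≠ 0 := by
  unfold SW
  apply mul_ne_zero
  · apply mul_ne_zero (by positivity) (by positivity)
  · have : 0 < ∑ k ∈ Finset.range (n + 1), qbinom q n k * q ^ ((k : ℝ) ^ 2 + k / 2) * (-y) ^ k := by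
      apply Finset.sum_pos'
      · intro k _
        have h1 := (qbinom_pos hq0 hq1 n k).le
        have h2 : (0:ℝ) ≤ q ^ ((k : ℝ) ^ 2 + k / 2) := (Real.rpow_pos_of_pos hq0 _).le
        have h3 : (0:ℝ) ≤ (-y) ^ k := pow_nonneg (by linarith) k
        positivity
      · refine ⟨0, Finset.mem_range.mpr (Nat.succ_pos n), ?_⟩
        simp only [pow_zero, mul_one]
        exact mul_pos (qbinom_pos hq0 hq1 n 0) (Real.rpow_pos_of_pos hq0 _)
    linarith

/-- the sum part -/
noncomputable def Tsum (q : ℝ) (n : ℕ) (y : ℝ) : ℝ :=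
  ∑ k ∈ Finset.range (n + 1), qbinom q n k * q ^ ((k : ℝ) ^ 2 + k / 2) * (-y) ^ k

lemma qbinom_symm {q : ℝ} {n k : ℕ} (hk : k ≤ n) : qbinom q n (n - k) = qbinom q n k := by
  unfold qbinom
  rw [Nat.sub_sub_self hk, mul_comm]

/-- functional equation -/
lemma Tsum_reflect {q : ℝ} (hq0 : 0 < q) (n : ℕ) {y : ℝ} (hy : y ≠ 0) :
    y ^ n * Tsum q n (q ^ (-(2 * (n : ℝ) + 1)) / y)
      = (-1) ^ n * q ^ (-((n:ℝ) ^ 2 + n / 2)) * Tsum q n y := by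
  unfold Tsum
  rw [Finset.mul_sum, Finset.mul_sum, ← Finset.sum_range_reflect
    (fun k => (-1:ℝ)^n * q ^ (-((n:ℝ)^2 + n/2)) * (qbinom q n k * q ^ ((k:ℝ)^2 + k/2) * (-y)^k))]
  apply Finset.sum_congr rfl
  intro k hk
  have hk' : k ≤ n := Nat.lt_succ_iff.mp (Finset.mem_range.mp hk)
  have hcast : ((n - k : ℕ) : ℝ) = (n : ℝ) - k := by
    push_cast [Nat.cast_sub hk']; ring
  simp only [Nat.add_sub_cancel]
  rw [qbinom_symm hk']
  have hyk : (-(q ^ (-(2 * (n : ℝ) + 1)) / y)) ^ k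
      = (-1) ^ k * q ^ (-(2 * (n : ℝ) + 1) * k) / y ^ k := by
    rw [neg_eq_neg_one_mul, mul_pow, div_pow, ← Real.rpow_natCast (q ^ (-(2 * (n : ℝ) + 1))) k,
      ← Real.rpow_mul hq0.le]
    ring
  rw [hyk, hcast]
  have hq : q ^ (-(2 * (n : ℝ) + 1) * k) * q ^ ((k:ℝ)^2 + k/2)
      = q ^ (-((n:ℝ)^2 + n/2)) * q ^ (((n:ℝ) - k)^2 + ((n:ℝ) - k)/2) := by
    rw [← Real.rpow_add hq0, ← Real.rpow_add hq0]
    congr 1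
    ring
  have hyn : (-y) ^ (n - k) = (-1)^(n-k) * y ^ (n - k) := by rw [neg_pow]
  have hsgn2 : ((-1:ℝ)) ^ n = (-1)^(n-k) * (-1)^k := by
    rw [← pow_add, Nat.sub_add_cancel hk']
  have hY : y ^ n = y ^ (n-k) * y ^ k := by rw [← pow_add, Nat.sub_add_cancel hk']
  rw [hyn, hsgn2, hY]
  set B := qbinom q n k
  set a := q ^ ((k:ℝ)^2 + k/2) with ha
  set b := q ^ (((n:ℝ)-k)^2 + ((n:ℝ)-k)/2) with hb
  set c := q ^ (-(2*(n:ℝ)+1) * (k:ℝ)) with hc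
  set m := q ^ (-((n:ℝ)^2 + (n:ℝ)/2)) with hm
  have hu : ((-1:ℝ))^(n-k) * (-1)^(n-k) = 1 := by
    rw [← pow_add, ← two_mul, pow_mul, neg_one_sq, one_pow]
  field_simp
  ring_nf
  have hu2 : ((-1:ℝ)) ^ ((n - k) * 2) = 1 := by rw [pow_mul', neg_one_sq, one_pow]
  rw [hu2]
  linear_combination B * hq

lemma SW_eq_pre_mul (q : ℝ) (n : ℕ) (y : ℝ) :
    SW q n y = (-1) ^ n * q ^ (-(n : ℝ) ^ 2 - n / 2) * Tsum q n y := rfl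

lemma SW_zero_iff {q : ℝ} (hq0 : 0 < q) (n : ℕ) (y : ℝ) :
    SW q n y = 0 ↔ Tsum q n y = 0 := by
  rw [SW_eq_pre_mul]
  constructor
  · intro h
    rcases mul_eq_zero.mp h with h' | h'
    · exfalso
      have h1 : ((-1:ℝ)) ^ n ≠ 0 := by positivity
      have h2 : q ^ (-(n : ℝ) ^ 2 - n / 2) ≠ 0 := (Real.rpow_pos_of_pos hq0 _).ne'
      exact mul_ne_zero h1 h2 h'
    · exact h'
  · intro h; rw [h, mul_zero]

/-- If x_1 < ⋯ < x_n are the zeros of S_n, then x_j x_{n+1-j} = q^{-2n-1}. -/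
theorem stmt1 (q : ℝ) (hq0 : 0 < q) (hq1 : q < 1) (n : ℕ) (x : Fin n → ℝ)
    (hmono : StrictMono x) (hzero : ∀ j, SW q n (x j) = 0)
    (hall : ∀ y : ℝ, SW q n y = 0 → ∃ j, y = x j) :
    ∀ j : Fin n, x j * x j.rev = q ^ (-(2 * (n : ℝ) + 1)) := by
  intro j
  set c := q ^ (-(2 * (n : ℝ) + 1)) with hcdef
  have hc : 0 < c := Real.rpow_pos_of_pos hq0 _
  have hpos : ∀ i, 0 < x i := fun i =>
    lt_of_not_ge fun h => SW_ne_zero_of_nonpos hq0 hq1 n h (hzero i)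
  have hmap : ∀ i, SW q n (c / x i) = 0 := by
    intro i
    have hT : Tsum q n (x i) = 0 := (SW_zero_iff hq0 n _).mp (hzero i)
    have hre := Tsum_reflect hq0 n (hpos i).ne'
    rw [hT, mul_zero] at hre
    have hxn : (x i) ^ n ≠ 0 := pow_ne_zero _ (hpos i).ne'
    have : Tsum q n (c / x i) = 0 := by
      rcases mul_eq_zero.mp hre with h | h
      · exact absurd h hxn
      · exact h
    exact (SW_zero_iff hq0 n _).mpr this
  choose φ hφ using fun i => hall _ (hmap i)
  have hanti : ∀ i i', i < i' → φ i' < φ i := by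
    intro i i' h
    have hx : x (φ i') < x (φ i) := by
      rw [← hφ, ← hφ]
      exact div_lt_div_of_pos_left hc (hpos i) (hmono h)
    exact hmono.lt_iff_lt.mp hx
  have hrev : StrictMono (fun i => (φ i).rev) := fun i i' h =>
    Fin.rev_lt_rev.mpr (hanti i i' h)
  have hsurj : Function.Surjective (fun i => (φ i).rev) :=
    Finite.surjective_of_injective hrev.injective
  have hid : (fun i : Fin n => (φ i).rev) = (id : Fin n → Fin n) := by
    haveI : WellFoundedLT (Fin n) := inferInstance
    refine (hrev.range_inj strictMono_id).mp ?_
    rw [hsurj.range_eq, Set.range_id]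
  have hj : φ j = j.rev := by
    have h1 : (φ j).rev = j := congrFun hid j
    calc φ j = (φ j).rev.rev := (Fin.rev_rev _).symm
      _ = j.rev := by rw [h1]
  rw [← hj, ← hφ j]
  have hxne : x j ≠ 0 := (hpos j).ne'
  field_simp
end

section
/- For 0<q<1 and 0 \le k \le n, the quantity f_n(k) = (q;q)_n \binom{n}{k}_q satisfies 0 \le 1 - f_n(k) \le (q^{k+1} + q^{n-k+1})/(1-q). -/
lemma qPoch_ratio (q : ℝ) (hq0 : 0 < q) (hq1 : q < 1) {k n : ℕ} (hk : k ≤ n) :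
    qPoch q q n / qPoch q q k = ∏ j ∈ Finset.Ico k n, (1 - q * q ^ j) := by
  have hne : ∀ j : ℕ, 1 - q * q ^ j ≠ 0 := by
    intro j
    have : q * q ^ j < 1 := by
      calc q * q ^ j ≤ q * 1 := by
            exact mul_le_mul_of_nonneg_left (pow_le_one₀ hq0.le hq1.le) hq0.le
        _ < 1 := by linarith
    linarith
  have hk0 : qPoch q q k ≠ 0 := by
    exact Finset.prod_ne_zero_iff.2 fun j _ => hne j
  rw [div_eq_iff hk0]
  simp only [qPoch]
  rw [← Finset.prod_range_mul_prod_Ico _ hk, mul_comm]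

lemma Ico_prod_pos (q : ℝ) (hq0 : 0 < q) (hq1 : q < 1) (s : Finset ℕ) :
    0 < ∏ j ∈ s, (1 - q * q ^ j) := by
  apply Finset.prod_pos
  intro j _
  have : q * q ^ j < 1 := by
    calc q * q ^ j ≤ q * 1 := mul_le_mul_of_nonneg_left (pow_le_one₀ hq0.le hq1.le) hq0.le
      _ < 1 := by linarith
  linarith

lemma Ico_prod_le_one (q : ℝ) (hq0 : 0 < q) (hq1 : q < 1) (s : Finset ℕ) :
    ∏ j ∈ s, (1 - q * q ^ j) ≤ 1 := by
  apply Finset.prod_le_one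
  · intro j _
    have : q * q ^ j < 1 := by
      calc q * q ^ j ≤ q * 1 := mul_le_mul_of_nonneg_left (pow_le_one₀ hq0.le hq1.le) hq0.le
        _ < 1 := by linarith
    linarith
  · intro j _
    nlinarith [pow_pos hq0 j]

/-- Weierstrass: 1 - ∏(1-x) ≤ ∑ x for x ∈ [0,1]. -/
lemma one_sub_prod_le_sum (s : Finset ℕ) (x : ℕ → ℝ) (h0 : ∀ j ∈ s, 0 ≤ x j)
    (h1 : ∀ j ∈ s, x j ≤ 1) : 1 - ∏ j ∈ s, (1 - x j) ≤ ∑ j ∈ s, x j := by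
  induction s using Finset.induction with
  | empty => simp
  | insert _ _ hj ih =>
    rename_i a t
    rw [Finset.prod_insert hj, Finset.sum_insert hj]
    have ih' := ih (fun j hjs => h0 j (Finset.mem_insert_of_mem hjs))
      (fun j hjs => h1 j (Finset.mem_insert_of_mem hjs))
    have hP : ∏ j ∈ t, (1 - x j) ≤ 1 := by
      apply Finset.prod_le_one
      · intro j hjs; linarith [h1 j (Finset.mem_insert_of_mem hjs)]
      · intro j hjs; linarith [h0 j (Finset.mem_insert_of_mem hjs)]
    have ha0 := h0 a (Finset.mem_insert_self a t)
    nlinarith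

lemma geom_tail_bound (q : ℝ) (hq0 : 0 < q) (hq1 : q < 1) (k n : ℕ) :
    ∑ j ∈ Finset.Ico k n, q * q ^ j ≤ q ^ (k + 1) / (1 - q) := by
  rcases le_or_gt k n with h | h
  · have : ∑ j ∈ Finset.Ico k n, q * q ^ j = q ^ (k+1) * ∑ i ∈ Finset.range (n - k), q ^ i := by
      rw [Finset.mul_sum, Finset.sum_Ico_eq_sum_range]
      apply Finset.sum_congr rfl
      intro i _
      ring
    rw [this]
    have hgeom : ∑ i ∈ Finset.range (n - k), q ^ i ≤ 1 / (1 - q) := by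
      rw [le_div_iff₀ (by linarith : (0:ℝ) < 1 - q)]
      have hm := geom_sum_mul q (n - k)
      have : 0 ≤ q ^ (n - k) := pow_nonneg hq0.le _
      nlinarith
    calc q ^ (k+1) * ∑ i ∈ Finset.range (n - k), q ^ i
        ≤ q ^ (k+1) * (1 / (1 - q)) :=
          mul_le_mul_of_nonneg_left hgeom (pow_nonneg hq0.le _)
      _ = q ^ (k+1) / (1 - q) := by ring
  · rw [Finset.Ico_eq_empty (by omega)]
    simp
    exact div_nonneg (by positivity) (by linarith)

theorem stmt2 (q : ℝ) (hq0 : 0 < q) (hq1 : q < 1) (n k : ℕ) (hk : k ≤ n) :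
    0 ≤ 1 - qPoch q q n * qbinom q n k ∧
      1 - qPoch q q n * qbinom q n k ≤ (q ^ (k + 1) + q ^ (n - k + 1)) / (1 - q) := by
  have hne : ∀ m : ℕ, qPoch q q m ≠ 0 := by
    intro m
    apply Finset.prod_ne_zero_iff.2
    intro j _
    have : q * q ^ j < 1 := by
      calc q * q ^ j ≤ q * 1 := mul_le_mul_of_nonneg_left (pow_le_one₀ hq0.le hq1.le) hq0.le
        _ < 1 := by linarith
    intro h; linarith
  have key : qPoch q q n * qbinom q n k =
      (∏ j ∈ Finset.Ico k n, (1 - q * q ^ j)) *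
      (∏ j ∈ Finset.Ico (n - k) n, (1 - q * q ^ j)) := by
    rw [← qPoch_ratio q hq0 hq1 hk, ← qPoch_ratio q hq0 hq1 (Nat.sub_le n k)]
    rw [qbinom, div_mul_div_comm, mul_div_assoc']
  set A := ∏ j ∈ Finset.Ico k n, (1 - q * q ^ j) with hA
  set B := ∏ j ∈ Finset.Ico (n - k) n, (1 - q * q ^ j) with hB
  have hApos := Ico_prod_pos q hq0 hq1 (Finset.Ico k n)
  have hBpos := Ico_prod_pos q hq0 hq1 (Finset.Ico (n - k) n)
  have hA1 := Ico_prod_le_one q hq0 hq1 (Finset.Ico k n)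
  have hB1 := Ico_prod_le_one q hq0 hq1 (Finset.Ico (n - k) n)
  rw [key]
  constructor
  · nlinarith
  · have hx0 : ∀ j : ℕ, 0 ≤ q * q ^ j := fun j => by positivity
    have hx1 : ∀ j : ℕ, q * q ^ j ≤ 1 := by
      intro j
      have : q * q ^ j ≤ q * 1 := mul_le_mul_of_nonneg_left (pow_le_one₀ hq0.le hq1.le) hq0.le
      linarith
    have hAb : 1 - A ≤ q ^ (k + 1) / (1 - q) := by
      calc 1 - A ≤ ∑ j ∈ Finset.Ico k n, q * q ^ j :=
            one_sub_prod_le_sum _ _ (fun j _ => hx0 j) (fun j _ => hx1 j)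
        _ ≤ q ^ (k + 1) / (1 - q) := geom_tail_bound q hq0 hq1 k n
    have hBb : 1 - B ≤ q ^ (n - k + 1) / (1 - q) := by
      calc 1 - B ≤ ∑ j ∈ Finset.Ico (n - k) n, q * q ^ j :=
            one_sub_prod_le_sum _ _ (fun j _ => hx0 j) (fun j _ => hx1 j)
        _ ≤ q ^ (n - k + 1) / (1 - q) := geom_tail_bound q hq0 hq1 (n - k) n
    have : 1 - A * B ≤ (1 - A) + (1 - B) := by nlinarith
    have hsum : (1 - A) + (1 - B) ≤ (q ^ (k + 1) + q ^ (n - k + 1)) / (1 - q) := by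
      rw [add_div]; linarith
    linarith
end

section
/- For the L×L matrix V with entries V_{ij} = \prod_{l=j+1}^{L-1} (1 - q^{N - k_i + l}) for 0 \le i,j \le L-1 (empty product equal to 1 when j = L-1), one has det(V) = q^{NL(L-1)/2 + L(L-1)(2L-1)/6} \prod_{0 \le i < j \le L-1} (q^{-k_j} - q^{-k_i}). -/
open Finset

private lemma pairsIoi {M : Type*} [CommMonoid M] {L : ℕ} (f : Fin L × Fin L → M) :
    ∏ p ∈ Finset.univ.filter (fun p : Fin L × Fin L => p.1 < p.2), f p =
      ∏ i : Fin L, ∏ j ∈ Finset.Ioi i, f (i, j) := by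
  rw [Finset.prod_sigma']
  exact Finset.prod_bij' (fun p _ => ⟨p.1, p.2⟩) (fun p _ => (p.1, p.2))
    (by simp [Finset.mem_sigma]) (by simp) (by simp) (by simp) (by simp)

private lemma pairsIio {M : Type*} [CommMonoid M] {L : ℕ} (f : Fin L × Fin L → M) :
    ∏ p ∈ Finset.univ.filter (fun p : Fin L × Fin L => p.1 < p.2), f p =
      ∏ j : Fin L, ∏ i ∈ Finset.Iio j, f (i, j) := by
  rw [Finset.prod_sigma']
  exact Finset.prod_bij' (fun p _ => ⟨p.2, p.1⟩) (fun p _ => (p.2, p.1))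
    (by simp [Finset.mem_sigma]) (by simp) (by simp) (by simp) (by simp)

private lemma sumIoi {L : ℕ} (f : Fin L × Fin L → ℕ) :
    ∑ p ∈ Finset.univ.filter (fun p : Fin L × Fin L => p.1 < p.2), f p =
      ∑ i : Fin L, ∑ j ∈ Finset.Ioi i, f (i, j) := by
  rw [Finset.sum_sigma']
  exact Finset.sum_bij' (fun p _ => ⟨p.1, p.2⟩) (fun p _ => (p.1, p.2))
    (by simp [Finset.mem_sigma]) (by simp) (by simp) (by simp) (by simp)

private lemma sumRangeCast (L : ℕ) : ∑ i ∈ Finset.range L, (i : ℝ) = L * ((L : ℝ) - 1) / 2 := by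
  induction L with
  | zero => simp
  | succ n ih => rw [Finset.sum_range_succ, ih]; push_cast; ring

private lemma sumRangeSqCast (L : ℕ) :
    ∑ i ∈ Finset.range L, (i : ℝ) ^ 2 = L * ((L : ℝ) - 1) * (2 * L - 1) / 6 := by
  induction L with
  | zero => simp
  | succ n ih => rw [Finset.sum_range_succ, ih]; push_cast; ring

theorem stmt9 (q : ℝ) (hq0 : 0 < q) (hq1 : q < 1) (L N : ℕ) (hL : 0 < L) (hN : 0 < N)
    (k : Fin L → ℤ) :
    Matrix.det (fun i j : Fin L =>
        ∏ l ∈ Finset.Ico ((j : ℕ) + 1) L, (1 - q ^ ((N : ℤ) - k i + l))) =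
      q ^ ((N : ℝ) * L * ((L : ℝ) - 1) / 2 + (L : ℝ) * ((L : ℝ) - 1) * (2 * (L : ℝ) - 1) / 6) *
        ∏ p ∈ Finset.univ.filter (fun p : Fin L × Fin L => p.1 < p.2),
          (q ^ (-(k p.2)) - q ^ (-(k p.1))) := by
  have hqne : q ≠ 0 := ne_of_gt hq0
  set x : Fin L → ℝ := fun i => q ^ (-(k i)) with hx
  set Q : Fin L → Polynomial ℝ := fun j =>
    ∏ l ∈ Finset.Ico (L - (j : ℕ)) L, (Polynomial.X - Polynomial.C ((q⁻¹) ^ (N + l))) with hQ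
  set c : Fin L → ℝ := fun j => ∏ l ∈ Finset.Ico (L - (j : ℕ)) L, (-(q ^ (N + l))) with hc
  have hmonic : ∀ j, (Q j).Monic := fun j =>
    Polynomial.monic_prod_of_monic _ _ (fun l _ => Polynomial.monic_X_sub_C _)
  have hdeg : ∀ j, (Q j).natDegree = j := by
    intro j
    rw [hQ]
    rw [Polynomial.natDegree_prod _ _ (fun l _ => Polynomial.X_sub_C_ne_zero _)]
    simp only [Polynomial.natDegree_X_sub_C]
    rw [Finset.sum_const, Nat.card_Ico, smul_eq_mul, mul_one]
    omega
  -- key entrywise identity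
  have key : ∀ i j : Fin L,
      (∏ l ∈ Finset.Ico (((Fin.rev j : Fin L) : ℕ) + 1) L, (1 - q ^ ((N : ℤ) - k (Fin.rev i) + l)))
        = c j * (Q j).eval (x (Fin.rev i)) := by
    intro i j
    have hrev : ((Fin.rev j : Fin L) : ℕ) + 1 = L - (j : ℕ) := by
      have := j.isLt
      rw [Fin.val_rev]
      omega
    rw [hrev, hQ, hc, Polynomial.eval_prod, ← Finset.prod_mul_distrib]
    apply Finset.prod_congr rfl
    intro l hl
    have h1 : ((N : ℤ) - k (Fin.rev i) + l) = ((N + l : ℕ) : ℤ) + (-(k (Fin.rev i))) := by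
      push_cast; ring
    rw [h1, zpow_add₀ hqne, zpow_natCast]
    simp only [Polynomial.eval_sub, Polynomial.eval_X, Polynomial.eval_C, hx]
    have hpow : q ^ (N + l) * (q⁻¹) ^ (N + l) = 1 := by
      rw [← mul_pow, mul_inv_cancel₀ hqne, one_pow]
    linear_combination -hpow
  -- determinant reduction
  have hdet : Matrix.det (fun i j : Fin L =>
      ∏ l ∈ Finset.Ico ((j : ℕ) + 1) L, (1 - q ^ ((N : ℤ) - k i + l)))
      = (∏ j : Fin L, c j) *
        ∏ i : Fin L, ∏ j ∈ Finset.Ioi i, (x (Fin.rev j) - x (Fin.rev i)) := by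
    refine (Matrix.det_submatrix_equiv_self Fin.revPerm _).symm.trans ?_
    have hsub : (Matrix.submatrix (fun i j : Fin L =>
          ∏ l ∈ Finset.Ico ((j : ℕ) + 1) L, (1 - q ^ ((N : ℤ) - k i + l)))
          Fin.revPerm Fin.revPerm)
        = Matrix.of (fun i j : Fin L =>
            c j * (Matrix.of (fun i j : Fin L => (Q j).eval (x (Fin.rev i)))) i j) := by
      ext i j
      exact key i j
    rw [hsub, Matrix.det_mul_row]
    rw [← Matrix.det_eval_matrixOfPolynomials_eq_det_vandermonde
      (fun i => x (Fin.rev i)) Q hdeg hmonic, Matrix.det_vandermonde]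
  -- rewrite the Vandermonde product over pairs
  have hP1 : (∏ i : Fin L, ∏ j ∈ Finset.Ioi i, (x (Fin.rev j) - x (Fin.rev i)))
      = ∏ p ∈ Finset.univ.filter (fun p : Fin L × Fin L => p.1 < p.2), (x p.1 - x p.2) := by
    rw [← pairsIoi (fun p : Fin L × Fin L => x (Fin.rev p.2) - x (Fin.rev p.1))]
    exact Finset.prod_bij' (fun p _ => (Fin.rev p.2, Fin.rev p.1))
      (fun p _ => (Fin.rev p.2, Fin.rev p.1))
      (by simp [Fin.rev_lt_rev]) (by simp [Fin.rev_lt_rev]) (by simp) (by simp) (by simp)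
  -- rewrite c j via Iio
  have hcj : ∀ j : Fin L, c j = ∏ i ∈ Finset.Iio j, (-(q ^ (N + (L - 1 - (i : ℕ))))) := by
    intro j
    have hj := j.isLt
    refine Finset.prod_bij' (fun l hl => (⟨L - 1 - l, by
        simp only [Finset.mem_Ico] at hl; omega⟩ : Fin L)) (fun i _ => L - 1 - (i : ℕ))
      ?_ ?_ ?_ ?_ ?_
    · intro l hl
      simp only [Finset.mem_Ico] at hl
      simp only [Finset.mem_Iio, Fin.lt_def]
      omega
    · intro i hi
      simp only [Finset.mem_Iio, Fin.lt_def] at hi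
      have := i.isLt
      simp only [Finset.mem_Ico]
      omega
    · intro l hl
      simp only [Finset.mem_Ico] at hl
      dsimp only
      omega
    · intro i hi
      have := i.isLt
      ext
      dsimp only
      omega
    · intro l hl
      simp only [Finset.mem_Ico] at hl
      dsimp only
      congr 2
      omega
  have hcprod : (∏ j : Fin L, c j)
      = ∏ p ∈ Finset.univ.filter (fun p : Fin L × Fin L => p.1 < p.2),
          (-(q ^ (N + (L - 1 - (p.1 : ℕ))))) := by
    rw [pairsIio (fun p : Fin L × Fin L => -(q ^ (N + (L - 1 - (p.1 : ℕ)))))]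
    exact Finset.prod_congr rfl fun j _ => hcj j
  -- the exponent sum
  set S : ℕ := ∑ p ∈ Finset.univ.filter (fun p : Fin L × Fin L => p.1 < p.2),
      (N + (L - 1 - (p.1 : ℕ))) with hSdef
  have hS2 : S = ∑ i : Fin L, (i : ℕ) * (N + (i : ℕ)) := by
    rw [hSdef, sumIoi (fun p : Fin L × Fin L => N + (L - 1 - (p.1 : ℕ)))]
    have h1 : ∀ i : Fin L, (∑ j ∈ Finset.Ioi i, (N + (L - 1 - (i : ℕ))))
        = (L - 1 - (i : ℕ)) * (N + (L - 1 - (i : ℕ))) := by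
      intro i
      rw [Finset.sum_const, Fin.card_Ioi, smul_eq_mul]
    rw [Finset.sum_congr rfl fun i _ => h1 i]
    refine (Fintype.sum_equiv Fin.revPerm _ _ fun i => ?_).symm
    have hi := i.isLt
    have : ((Fin.revPerm i : Fin L) : ℕ) = L - 1 - (i : ℕ) := by
      simp [Fin.revPerm, Fin.val_rev]; omega
    rw [this]
    congr 2 <;> omega
  have hScast : (S : ℝ) = (N : ℝ) * L * ((L : ℝ) - 1) / 2
      + (L : ℝ) * ((L : ℝ) - 1) * (2 * (L : ℝ) - 1) / 6 := by
    rw [hS2]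
    push_cast
    rw [Fin.sum_univ_eq_sum_range (fun i => (i : ℝ) * ((N : ℝ) + i)) L]
    have h2 : (∑ i ∈ Finset.range L, ((i : ℝ) * ((N : ℝ) + i)))
        = (N : ℝ) * (∑ i ∈ Finset.range L, (i : ℝ)) + ∑ i ∈ Finset.range L, (i : ℝ) ^ 2 := by
      rw [Finset.mul_sum, ← Finset.sum_add_distrib]
      exact Finset.sum_congr rfl fun i _ => by ring
    rw [h2, sumRangeCast, sumRangeSqCast]
    ring
  rw [hdet, hcprod, hP1, ← Finset.prod_mul_distrib]
  have hmerge : ∀ p ∈ Finset.univ.filter (fun p : Fin L × Fin L => p.1 < p.2),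
      (-(q ^ (N + (L - 1 - (p.1 : ℕ))))) * (x p.1 - x p.2)
        = q ^ (N + (L - 1 - (p.1 : ℕ))) * (x p.2 - x p.1) := fun p _ => by ring
  rw [Finset.prod_congr rfl hmerge, Finset.prod_mul_distrib,
    Finset.prod_pow_eq_pow_sum, ← hSdef]
  have hrpow : q ^ ((N : ℝ) * L * ((L : ℝ) - 1) / 2
      + (L : ℝ) * ((L : ℝ) - 1) * (2 * (L : ℝ) - 1) / 6) = q ^ S := by
    rw [← hScast, Real.rpow_natCast]
  rw [hrpow]
end

section
/- Suppose f_n(k) is uniformly bounded for n\ge0, 0\le k\le n, and a_k is a bounded sequence with sup_{0\le k\le n\delta} |f_n(k) - a_k| \le \varepsilon(n,\delta) \to 0 as n\to\infty for some \delta\in(0,1). Let P_n(x) = \sum_{k=0}^n q^{k^2} f_n(k)(-x)^k and \Phi(z) = \sum_{k=0}^\infty a_k q^{k^2} z^k, and d = \lfloor n\delta \rfloor. Then uniformly for |y| \le M and t \ge 0, P_n(q^{nt} y) = \Phi(-q^{nt} y) + O(\varepsilon(n,\delta)) + O(q^{d^2} M^d). -/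
open Filter Finset

set_option maxHeartbeats 1000000

lemma stmt14_aux (F h : ℕ → ℝ) (hF : Summable F) (hh : Summable h)
    (hb : ∀ j, |F j| ≤ h j) : |∑' j, F j| ≤ ∑' j, h j := by
  have habs : Summable fun j => ‖F j‖ := by simpa [Real.norm_eq_abs] using hF.abs
  have h1 : |∑' j, F j| ≤ ∑' j, |F j| := by
    simpa [Real.norm_eq_abs] using norm_tsum_le_tsum_norm (f := F) habs
  exact h1.trans (Summable.tsum_le_tsum hb hF.abs hh)

/-- Outer asymptotics (j = 0 case): P_n(q^{nt} y) = Φ(-q^{nt} y) + O(ε(n,δ)) + O(q^{d²} M^d),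
uniformly for |y| ≤ M and t ≥ 0. -/
theorem stmt14 (q δ M : ℝ) (hq0 : 0 < q) (hq1 : q < 1) (hδ0 : 0 < δ) (hδ1 : δ < 1)
    (hM : 1 ≤ M)
    (f : ℕ → ℕ → ℝ) (B : ℝ) (hf : ∀ n k, k ≤ n → |f n k| ≤ B)
    (a : ℕ → ℝ) (A : ℝ) (ha : ∀ k, |a k| ≤ A)
    (ε : ℕ → ℝ) (hε : Tendsto ε atTop (nhds 0))
    (hfa : ∀ (n k : ℕ), k ≤ n → (k : ℝ) ≤ n * δ → |f n k - a k| ≤ ε n) :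
    ∃ C > 0, ∀ n : ℕ, ∀ y t : ℝ, |y| ≤ M → 0 ≤ t →
      |(∑ k ∈ Finset.range (n + 1), q ^ (k ^ 2) * f n k * (-(q ^ ((n : ℝ) * t) * y)) ^ k) -
          ∑' k : ℕ, a k * q ^ (k ^ 2) * (-(q ^ ((n : ℝ) * t) * y)) ^ k| ≤
        C * (ε n + q ^ ((⌊(n : ℝ) * δ⌋₊) ^ 2) * M ^ (⌊(n : ℝ) * δ⌋₊)) := by
  have hM0 : (0:ℝ) < M := lt_of_lt_of_le one_pos hM
  set g : ℕ → ℝ := fun k => q ^ (k ^ 2) * M ^ k with hg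
  have hg_pos : ∀ k, 0 < g k := fun k => by positivity
  have hg_sum : Summable g := by
    apply summable_of_ratio_test_tendsto_lt_one (l := 0) one_pos
    · exact Eventually.of_forall fun k => (hg_pos k).ne'
    · have : (fun k : ℕ => ‖g (k + 1)‖ / ‖g k‖) = fun k : ℕ => (q * M) * (q ^ 2) ^ k := by
        funext k
        rw [Real.norm_eq_abs, Real.norm_eq_abs, abs_of_pos (hg_pos _), abs_of_pos (hg_pos _)]
        simp only [hg]
        rw [div_eq_iff (hg_pos k).ne']
        ring
      rw [this]
      simpa using (tendsto_pow_atTop_nhds_zero_of_lt_one (by positivity)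
        (by nlinarith)).const_mul (q * M)
  set S : ℝ := ∑' k, g k with hS
  have hS_pos : 0 < S := Summable.tsum_pos hg_sum (fun k => (hg_pos k).le) 0 (hg_pos 0)
  -- key: g (j + (d+1)) ≤ g d * g (j+1)
  have hgd : ∀ d j : ℕ, g (j + (d + 1)) ≤ g d * g (j + 1) := by
    intro d j
    have h1 : q ^ ((j + (d+1)) ^ 2) ≤ q ^ (d ^ 2 + (j+1) ^ 2) := by
      apply pow_le_pow_of_le_one hq0.le hq1.le
      nlinarith [Nat.zero_le (d * (j+1))]
    calc g (j + (d+1)) = q ^ ((j + (d+1)) ^ 2) * M ^ (j + (d+1)) := rfl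
      _ ≤ q ^ (d ^ 2 + (j+1) ^ 2) * M ^ (j + (d+1)) := by
          apply mul_le_mul_of_nonneg_right h1 (by positivity)
      _ = g d * g (j + 1) := by simp only [hg]; ring
  have htail : ∀ d : ℕ, ∑' j, g (j + (d + 1)) ≤ g d * S := by
    intro d
    have h1 : Summable fun j => g (j + (d + 1)) := (summable_nat_add_iff _).2 hg_sum
    have h2 : Summable fun j => g d * g (j + 1) :=
      (((summable_nat_add_iff 1).2 hg_sum).mul_left _)
    calc ∑' j, g (j + (d + 1)) ≤ ∑' j, g d * g (j + 1) := Summable.tsum_le_tsum (hgd d) h1 h2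
      _ = g d * ∑' j, g (j + 1) := by rw [tsum_mul_left]
      _ ≤ g d * S := by
          apply mul_le_mul_of_nonneg_left _ (hg_pos d).le
          have h3 := Summable.sum_add_tsum_nat_add 1 hg_sum
          simp only [range_one, sum_singleton] at h3
          nlinarith [hg_pos 0, h3]
  have hB : 0 ≤ B := (abs_nonneg _).trans (hf 0 0 le_rfl)
  have hA : 0 ≤ A := (abs_nonneg _).trans (ha 0)
  refine ⟨S * (1 + B + A), by positivity, ?_⟩
  intro n y t hy ht
  set d := ⌊(n : ℝ) * δ⌋₊ with hdd
  have hεn : 0 ≤ ε n := (abs_nonneg _).trans (hfa n 0 (Nat.zero_le _) (by simp; positivity))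
  have hd_le : d ≤ n := by
    have : (n : ℝ) * δ ≤ n := by nlinarith [Nat.cast_nonneg (α := ℝ) n]
    calc d ≤ ⌊(n:ℝ)⌋₊ := Nat.floor_le_floor this
      _ = n := Nat.floor_natCast n
  set z : ℝ := -(q ^ ((n : ℝ) * t) * y) with hz
  have hzM : |z| ≤ M := by
    rw [hz, abs_neg, abs_mul]
    have h1 : |q ^ ((n : ℝ) * t)| ≤ 1 := by
      rw [abs_of_pos (Real.rpow_pos_of_pos hq0 _)]
      exact Real.rpow_le_one hq0.le hq1.le (by positivity)
    nlinarith [abs_nonneg y, abs_nonneg (q ^ ((n:ℝ)*t))]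
  have hzk : ∀ k : ℕ, |z ^ k| ≤ M ^ k := fun k => by
    rw [abs_pow]; exact pow_le_pow_left₀ (abs_nonneg _) hzM k
  -- Summability of the Φ series
  have hΦterm : ∀ k, |a k * q ^ (k ^ 2) * z ^ k| ≤ A * g k := by
    intro k
    rw [abs_mul, abs_mul, abs_of_pos (pow_pos hq0 _)]
    have := ha k; have := hzk k
    have h3 : 0 < q ^ (k^2) := pow_pos hq0 _
    calc |a k| * q ^ (k^2) * |z ^ k| ≤ A * q ^ (k^2) * M ^ k := by
          apply mul_le_mul (mul_le_mul_of_nonneg_right (ha k) h3.le) (hzk k)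
            (abs_nonneg _) (by positivity)
      _ = A * g k := by rw [hg]; ring
  have hΦsum : Summable fun k => a k * q ^ (k ^ 2) * z ^ k := by
    apply Summable.of_abs
    exact (hg_sum.mul_left A).of_nonneg_of_le (fun k => abs_nonneg _) hΦterm
  -- Decompose
  have hPsplit : ∑ k ∈ range (n + 1), q ^ (k ^ 2) * f n k * z ^ k
      = ∑ k ∈ range (d + 1), q ^ (k ^ 2) * f n k * z ^ k
        + ∑ k ∈ Ico (d + 1) (n + 1), q ^ (k ^ 2) * f n k * z ^ k :=
    (Finset.sum_range_add_sum_Ico _ (by omega)).symm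
  have hΦsplit : ∑' k, a k * q ^ (k ^ 2) * z ^ k
      = ∑ k ∈ range (d + 1), a k * q ^ (k ^ 2) * z ^ k
        + ∑' j, a (j + (d+1)) * q ^ ((j + (d+1)) ^ 2) * z ^ (j + (d+1)) :=
    (Summable.sum_add_tsum_nat_add (d+1) hΦsum).symm
  rw [hPsplit, hΦsplit]
  have hSd : ∑ k ∈ range (d + 1), g k ≤ S := Summable.sum_le_tsum _ (fun k _ => (hg_pos k).le) hg_sum
  -- bound A1
  have hA1 : |∑ k ∈ range (d + 1), q ^ (k ^ 2) * f n k * z ^ k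
      - ∑ k ∈ range (d + 1), a k * q ^ (k ^ 2) * z ^ k| ≤ ε n * S := by
    rw [← Finset.sum_sub_distrib]
    calc |∑ k ∈ range (d + 1), (q ^ (k ^ 2) * f n k * z ^ k - a k * q ^ (k ^ 2) * z ^ k)|
        ≤ ∑ k ∈ range (d + 1), |q ^ (k ^ 2) * f n k * z ^ k - a k * q ^ (k ^ 2) * z ^ k| :=
          Finset.abs_sum_le_sum_abs _ _
      _ ≤ ∑ k ∈ range (d + 1), ε n * g k := by
          apply Finset.sum_le_sum
          intro k hk
          rw [Finset.mem_range] at hk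
          have hkd : k ≤ d := by omega
          have hkn : k ≤ n := hkd.trans hd_le
      
          have hkδ : (k : ℝ) ≤ (n : ℝ) * δ := le_trans (by exact_mod_cast hkd)
            (Nat.floor_le (by positivity))
          have h1 : q ^ (k ^ 2) * f n k * z ^ k - a k * q ^ (k ^ 2) * z ^ k
              = (f n k - a k) * (q ^ (k ^ 2) * z ^ k) := by ring
          rw [h1, abs_mul, abs_mul, abs_of_pos (pow_pos hq0 _)]
          calc |f n k - a k| * (q ^ (k^2) * |z ^ k|) ≤ ε n * (q ^ (k^2) * M ^ k) := by
                apply mul_le_mul (hfa n k hkn hkδ) (by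
                  exact mul_le_mul_of_nonneg_left (hzk k) (pow_pos hq0 _).le)
                  (by positivity) hεn
            _ = ε n * g k := rfl
      _ = ε n * ∑ k ∈ range (d + 1), g k := by rw [Finset.mul_sum]
      _ ≤ ε n * S := mul_le_mul_of_nonneg_left hSd hεn
  -- bound A2
  have hIco : ∑ k ∈ Ico (d + 1) (n + 1), g k ≤ g d * S := by
    have h1 : ∑ k ∈ Ico (d + 1) (n + 1), g k = ∑ j ∈ range (n + 1 - (d + 1)), g (j + (d + 1)) := by
      rw [Finset.sum_Ico_eq_sum_range]
      exact Finset.sum_congr rfl fun j _ => by rw [add_comm]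
    rw [h1]
    calc ∑ j ∈ range (n + 1 - (d + 1)), g (j + (d + 1))
        ≤ ∑' j, g (j + (d + 1)) := Summable.sum_le_tsum _
          (fun k _ => (hg_pos _).le) ((summable_nat_add_iff _).2 hg_sum)
      _ ≤ g d * S := htail d
  have hA2 : |∑ k ∈ Ico (d + 1) (n + 1), q ^ (k ^ 2) * f n k * z ^ k| ≤ B * (g d * S) := by
    calc |∑ k ∈ Ico (d + 1) (n + 1), q ^ (k ^ 2) * f n k * z ^ k|
        ≤ ∑ k ∈ Ico (d + 1) (n + 1), |q ^ (k ^ 2) * f n k * z ^ k| :=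
          Finset.abs_sum_le_sum_abs _ _
      _ ≤ ∑ k ∈ Ico (d + 1) (n + 1), B * g k := by
          apply Finset.sum_le_sum
          intro k hk
          rw [Finset.mem_Ico] at hk
          rw [abs_mul, abs_mul, abs_of_pos (pow_pos hq0 _)]
          calc q ^ (k^2) * |f n k| * |z ^ k| ≤ q ^ (k^2) * B * M ^ k := by
                apply mul_le_mul (mul_le_mul_of_nonneg_left (hf n k (by omega)) (pow_pos hq0 _).le)
                  (hzk k) (abs_nonneg _) (by positivity)
            _ = B * g k := by rw [hg]; ring
      _ = B * ∑ k ∈ Ico (d + 1) (n + 1), g k := by rw [Finset.mul_sum]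
      _ ≤ B * (g d * S) := mul_le_mul_of_nonneg_left hIco hB
  -- bound A3
  have hA3 : |∑' j, a (j + (d+1)) * q ^ ((j + (d+1)) ^ 2) * z ^ (j + (d+1))| ≤ A * (g d * S) := by
    have hsum : Summable fun j => a (j + (d+1)) * q ^ ((j + (d+1)) ^ 2) * z ^ (j + (d+1)) :=
      (summable_nat_add_iff (f := fun k => a k * q ^ (k ^ 2) * z ^ k) (d+1)).2 hΦsum
    have hsum2 : Summable fun j => A * g (j + (d+1)) :=
      ((summable_nat_add_iff (f := g) (d+1)).2 hg_sum).mul_left A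
    have h1 := stmt14_aux _ _ hsum hsum2 (fun j => hΦterm (j + (d+1)))
    calc |∑' j, a (j + (d+1)) * q ^ ((j + (d+1)) ^ 2) * z ^ (j + (d+1))|
        ≤ ∑' j, A * g (j + (d+1)) := h1
      _ = A * ∑' j, g (j + (d+1)) := tsum_mul_left
      _ ≤ A * (g d * S) := mul_le_mul_of_nonneg_left (htail d) hA
  have hgdval : g d = q ^ (d ^ 2) * M ^ d := rfl
  have habs : ∀ x1 x2 y1 y2 : ℝ, |(x1 + x2) - (y1 + y2)| ≤ |x1 - y1| + |x2| + |y2| := by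
    intro x1 x2 y1 y2
    calc |(x1 + x2) - (y1 + y2)| = |(x1 - y1) + x2 + (-y2)| := by ring_nf
      _ ≤ |x1 - y1| + |x2| + |y2| := by
        calc |(x1 - y1) + x2 + (-y2)| ≤ |(x1 - y1) + x2| + |(-y2)| := abs_add_le _ _
          _ ≤ |x1 - y1| + |x2| + |y2| := by rw [abs_neg]; gcongr; exact abs_add_le _ _
  refine le_trans (habs _ _ _ _) ?_
  rw [← hgdval]
  have hgd_pos := hg_pos d
  nlinarith [hA1, hA2, hA3, mul_nonneg (mul_nonneg hεn hS_pos.le) (add_nonneg hB hA), mul_pos hS_pos hgd_pos]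
end
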